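/- Extension Theorem for smooth games: If a cost minimization game G is (λ,μ)-smooth under a sum-bounded social function SF with λ > 0 and μ < 1, then for every coarse correlated equilibrium p (a probability distribution over profiles) and social optimum o with SF(o) > 0, it holds that Σ_σ p_σ·SF(σ) ≤ (λ/(1−μ))·SF(o). -/
import Mathlib


open Finset

/-- Extension Theorem for smooth games: if a cost minimization game is
(λ,μ)-smooth under a sum-bounded social function SF with λ > 0 and μ < 1, then every
coarse correlated equilibrium p and social optimum o with SF(o) > 0 satisfy
E_p[SF] ≤ (λ/(1−μ))·SF(o). -/
theorem stmt11 {n : ℕ} {S : Fin n → Type} [∀ i, Fintype (S i)] [∀ i, DecidableEq (S i)]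
    (c : ((i : Fin n) → S i) → Fin n → ℝ) (SF : ((i : Fin n) → S i) → ℝ)
    (hc : ∀ σ i, 0 ≤ c σ i) (hSFnn : ∀ σ, 0 ≤ SF σ)
    (hsb : ∀ σ, SF σ ≤ ∑ i, c σ i)
    (lam μ : ℝ) (hlam : 0 < lam) (hμ : μ < 1)
    (hsmooth : ∀ σ σ' : (i : Fin n) → S i,
      (∑ i, c (Function.update σ i (σ' i)) i) ≤ lam * SF σ' + μ * SF σ)
    (p : ((i : Fin n) → S i) → ℝ) (hp : ∀ σ, 0 ≤ p σ) (hp1 : ∑ σ, p σ = 1)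
    (hcce : ∀ (i : Fin n) (x : S i),
      (∑ σ, p σ * c σ i) ≤ ∑ σ, p σ * c (Function.update σ i x) i)
    (o : (i : Fin n) → S i) (hopt : ∀ τ, SF o ≤ SF τ) (ho : 0 < SF o) :
    (∑ σ, p σ * SF σ) ≤ (lam / (1 - μ)) * SF o := by
  set E := ∑ σ, p σ * SF σ with hE
  have key : E ≤ lam * SF o + μ * E := by
    calc E ≤ ∑ σ, p σ * ∑ i, c σ i := by
          apply Finset.sum_le_sum
          intro σ _
          exact mul_le_mul_of_nonneg_left (hsb σ) (hp σ)
      _ = ∑ i, ∑ σ, p σ * c σ i := by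
          rw [Finset.sum_comm]
          simp [Finset.mul_sum]
      _ ≤ ∑ i, ∑ σ, p σ * c (Function.update σ i (o i)) i := by
          exact Finset.sum_le_sum fun i _ => hcce i (o i)
      _ = ∑ σ, p σ * ∑ i, c (Function.update σ i (o i)) i := by
          rw [Finset.sum_comm]
          simp [Finset.mul_sum]
      _ ≤ ∑ σ, p σ * (lam * SF o + μ * SF σ) := by
          apply Finset.sum_le_sum
          intro σ _
          exact mul_le_mul_of_nonneg_left (hsmooth σ o) (hp σ)
      _ = lam * SF o + μ * E := by
          simp only [mul_add, Finset.sum_add_distrib, hE]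
          rw [← Finset.sum_mul, hp1, Finset.mul_sum]
          rw [one_mul]
          congr 1
          exact Finset.sum_congr rfl fun σ _ => by ring
  have h1 : (0:ℝ) < 1 - μ := by linarith
  rw [div_mul_eq_mul_div, le_div_iff₀ h1]
  nlinarith
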